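/- For any cell i ∈ D, there is exactly one cell j in the bottom row B = ℤ≥1 × {1} with 0 ≤ g(j) − g(i) < a; consequently #{(i,j) ∈ D × B : 0 ≤ g(j) − g(i) < a} = |D| for any finite D ⊆ G. -/
import Mathlib


def g (a b : ℤ) (p : ℤ × ℤ) : ℤ := a * b - a * p.1 - b * p.2

def Gset (a b : ℤ) : Set (ℤ × ℤ) := {p | 1 ≤ p.1 ∧ 1 ≤ p.2 ∧ 0 < g a b p}

/-- each i ∈ D projects to a unique cell of the bottom row
B = ℤ≥1 × {1}, so #\{(i,j) ∈ D × B : 0 ≤ g(j) − g(i) < a\} = |D|. -/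
theorem stmt5 (a b : ℤ) (ha : 1 < a) (hab : a < b) (hcop : IsCoprime a b)
    (D : Set (ℤ × ℤ)) (hD : D ⊆ Gset a b) (hfin : D.Finite) :
    (∀ i ∈ D, ∃! j : ℤ × ℤ, (1 ≤ j.1 ∧ j.2 = 1) ∧
      0 ≤ g a b j - g a b i ∧ g a b j - g a b i < a) ∧
    Set.ncard {p : (ℤ × ℤ) × (ℤ × ℤ) | p.1 ∈ D ∧ (1 ≤ p.2.1 ∧ p.2.2 = 1) ∧
      0 ≤ g a b p.2 - g a b p.1 ∧ g a b p.2 - g a b p.1 < a} = D.ncard := by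
  have ha0 : 0 < a := by linarith
  -- canonical projection
  set f : ℤ × ℤ → (ℤ × ℤ) × (ℤ × ℤ) :=
    fun i => (i, (i.1 + (b * (i.2 - 1)) / a, 1)) with hf
  have key : ∀ i ∈ D, (1 ≤ (f i).2.1 ∧ (f i).2.2 = 1) ∧
      0 ≤ g a b (f i).2 - g a b i ∧ g a b (f i).2 - g a b i < a := by
    intro i hi
    obtain ⟨hx, hy, _⟩ := hD hi
    have hdiv : 0 ≤ (b * (i.2 - 1)) / a :=
      Int.ediv_nonneg (by nlinarith) (le_of_lt ha0)
    have hval : g a b (f i).2 - g a b i = (b * (i.2 - 1)) % a := by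
      simp only [hf, g]
      rw [Int.emod_def]
      ring
    refine ⟨⟨by simp [hf]; linarith, rfl⟩, ?_, ?_⟩
    · rw [hval]; exact Int.emod_nonneg _ (ne_of_gt ha0)
    · rw [hval]; exact Int.emod_lt_of_pos _ ha0
  have uniq : ∀ i ∈ D, ∀ j : ℤ × ℤ, ((1 ≤ j.1 ∧ j.2 = 1) ∧
      0 ≤ g a b j - g a b i ∧ g a b j - g a b i < a) → j = (f i).2 := by
    intro i hi j ⟨⟨hj1, hj2⟩, h1, h2⟩
    obtain ⟨_, ⟨h1', h2'⟩⟩ := key i hi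
    have e2 : (f i).2.2 = 1 := rfl
    have hv : g a b j - g a b i = a * (i.1 - j.1) + b * (i.2 - 1) := by
      simp [g, hj2]; ring
    have hv' : g a b (f i).2 - g a b i = a * (i.1 - (f i).2.1) + b * (i.2 - 1) := by
      simp [g, e2]; ring
    rw [hv] at h1 h2; rw [hv'] at h1' h2'
    have : j.1 = (f i).2.1 := by nlinarith
    exact Prod.ext this (hj2.trans e2.symm)
  constructor
  · intro i hi
    exact ⟨(f i).2, key i hi, fun j hj => uniq i hi j hj⟩
  · have hset : {p : (ℤ × ℤ) × (ℤ × ℤ) | p.1 ∈ D ∧ (1 ≤ p.2.1 ∧ p.2.2 = 1) ∧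
        0 ≤ g a b p.2 - g a b p.1 ∧ g a b p.2 - g a b p.1 < a} = f '' D := by
      ext p
      constructor
      · rintro ⟨h1, h2, h3, h4⟩
        refine ⟨p.1, h1, ?_⟩
        have := uniq p.1 h1 p.2 ⟨h2, h3, h4⟩
        simp only [hf] at this
        exact Prod.ext rfl this.symm
      · rintro ⟨i, hi, rfl⟩
        exact ⟨hi, key i hi⟩
    rw [hset]
    exact Set.ncard_image_of_injective D (fun x y h => congrArg Prod.fst h)
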